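/- Let M be a symmetric positive definite matrix and set v* = 1/(1ᵀ M⁻¹ 1). Then the matrix M - v*·11ᵀ is positive semidefinite and singular (its determinant is zero, equivalently the vector M⁻¹1 lies in its kernel). -/

import Mathlib

open Matrix

lemma vecMulVec_mulVec' {M : ℕ} (w v x : Fin M → ℝ) :
    vecMulVec w v *ᵥ x = (v ⬝ᵥ x) • w := by
  ext i
  simp [vecMulVec_apply, mulVec, dotProduct, Finset.sum_mul, Finset.mul_sum, mul_comm, mul_left_comm]

/-- For a symmetric positive definite matrix `A` and `v* = 1/(1ᵀ A⁻¹ 1)`, the matrix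
`A - v* • 11ᵀ` is positive semidefinite and singular: its determinant is zero, and the
vector `A⁻¹ 1` lies in its kernel. -/
theorem cshift_shifted_matrix_psd_singular {M : ℕ} (hM : 0 < M)
    (A : Matrix (Fin M) (Fin M) ℝ) (hA : A.PosDef) :
    (A - (1 / ((1 : Fin M → ℝ) ⬝ᵥ (A⁻¹ *ᵥ (1 : Fin M → ℝ)))) •
        vecMulVec (1 : Fin M → ℝ) 1).PosSemidef ∧
    (A - (1 / ((1 : Fin M → ℝ) ⬝ᵥ (A⁻¹ *ᵥ (1 : Fin M → ℝ)))) •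
        vecMulVec (1 : Fin M → ℝ) 1).det = 0 ∧
    (A - (1 / ((1 : Fin M → ℝ) ⬝ᵥ (A⁻¹ *ᵥ (1 : Fin M → ℝ)))) •
        vecMulVec (1 : Fin M → ℝ) 1) *ᵥ (A⁻¹ *ᵥ (1 : Fin M → ℝ)) = 0 := by
  have hone : (1 : Fin M → ℝ) ≠ 0 := by
    intro h
    have := congrFun h ⟨0, hM⟩
    simp at this
  set u : Fin M → ℝ := A⁻¹ *ᵥ 1 with hu
  set c : ℝ := (1 : Fin M → ℝ) ⬝ᵥ u with hcdef
  have hAdet : IsUnit A.det := isUnit_iff_ne_zero.mpr (ne_of_gt hA.det_pos)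
  have hAu : A *ᵥ u = 1 := by
    rw [hu, mulVec_mulVec, Matrix.mul_nonsing_inv A hAdet, one_mulVec]
  have hc : 0 < c := by
    have := hA.inv.dotProduct_mulVec_pos hone
    simpa [hcdef, hu] using this
  have hcne : c ≠ 0 := ne_of_gt hc
  have hAT : Aᵀ = A := by
    ext i j
    simpa using (congrFun (congrFun hA.isHermitian j) i).symm
  have hker : (A - (1 / c) • vecMulVec (1 : Fin M → ℝ) 1) *ᵥ u = 0 := by
    rw [sub_mulVec, smul_mulVec, vecMulVec_mulVec', hAu, ← hcdef, smul_smul]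
    field_simp
    simp
  have hune : u ≠ 0 := by
    intro h
    rw [h] at hcdef
    simp [hcdef] at hc
  refine ⟨?_, ?_, hker⟩
  · rw [posSemidef_iff_dotProduct_mulVec]
    constructor
    · unfold Matrix.IsHermitian
      rw [conjTranspose_sub, conjTranspose_smul]
      have h1 : (vecMulVec (1 : Fin M → ℝ) (1 : Fin M → ℝ))ᴴ = vecMulVec (1 : Fin M → ℝ) (1 : Fin M → ℝ) := by
        ext i j; simp [vecMulVec_apply]
      rw [h1, hA.isHermitian]
      simp
    · intro x
      set s : ℝ := (1 : Fin M → ℝ) ⬝ᵥ x with hs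
      set y : Fin M → ℝ := x - (s / c) • u with hy
      have hq : 0 ≤ y ⬝ᵥ A *ᵥ y := by
        have := hA.posSemidef.dotProduct_mulVec_nonneg y
        rwa [star_trivial] at this
      have hvm : u ᵥ* A = 1 := by
        rw [← mulVec_transpose, hAT, hAu]
      have hsym : u ⬝ᵥ A *ᵥ x = s := by
        rw [dotProduct_mulVec, hvm, hs]
      have hx1 : x ⬝ᵥ A *ᵥ u = s := by
        rw [hAu, dotProduct_comm, hs]
      have huu : u ⬝ᵥ A *ᵥ u = c := by
        rw [hAu, dotProduct_comm, hcdef]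
      have hexp : y ⬝ᵥ A *ᵥ y = x ⬝ᵥ A *ᵥ x - 2 * (s / c) * s + (s / c) ^ 2 * c := by
        rw [hy]
        simp only [mulVec_sub, mulVec_smul, sub_dotProduct, dotProduct_sub,
          smul_dotProduct, dotProduct_smul, smul_eq_mul, hsym, hx1, huu]
        ring
      have hgoal : x ⬝ᵥ ((A - (1 / c) • vecMulVec (1 : Fin M → ℝ) 1) *ᵥ x)
          = x ⬝ᵥ A *ᵥ x - (1 / c) * s ^ 2 := by
        rw [sub_mulVec, smul_mulVec, vecMulVec_mulVec', dotProduct_sub,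
          dotProduct_smul, dotProduct_smul, dotProduct_comm x 1, ← hs]
        simp only [smul_eq_mul]
        ring
      have h3 : (1 / c) * s ^ 2 = 2 * (s / c) * s - (s / c) ^ 2 * c := by
        field_simp
        ring
      have : (0:ℝ) ≤ x ⬝ᵥ A *ᵥ x - (1 / c) * s ^ 2 := by
        rw [hexp] at hq
        linarith
      rw [show (star x) = x from star_trivial x, hgoal]
      exact this
  · exact (Matrix.exists_mulVec_eq_zero_iff).mp ⟨u, hune, hker⟩
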